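/- Let u : ℝ → ℝ be a twice continuously differentiable function that is 1-periodic, i.e. u(h+1) = u(h) for all h ∈ ℝ. Then ∫₀¹ ((u³)''(h))² dh = 9 ∫₀¹ u(h)⁴ (u''(h))² dh, where (u³)'' denotes the second derivative of the function h ↦ u(h)³. -/

import Mathlib

open intervalIntegral

/-- For a 1-periodic `C²` function `u`, one has
`∫₀¹ ((u³)'')² = 9 ∫₀¹ u⁴ (u'')²`. -/
theorem lemma_cube_second_derivative_identity
    (u : ℝ → ℝ) (hu : ContDiff ℝ 2 u)
    (hper : ∀ h : ℝ, u (h + 1) = u h) :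
    ∫ h in (0:ℝ)..1, (iteratedDeriv 2 (fun x => (u x) ^ 3) h) ^ 2
      = 9 * ∫ h in (0:ℝ)..1, (u h) ^ 4 * (iteratedDeriv 2 u h) ^ 2 := by
  have h2 : ContDiff ℝ (1+1 : ℕ) u := by exact_mod_cast hu
  have hud : Differentiable ℝ u := hu.differentiable (by norm_num)
  have hd1 : ContDiff ℝ 1 (deriv u) := by
    have := ContDiff.iterate_deriv' 1 1 (f := u) (by exact_mod_cast hu)
    simpa using this
  have hud2 : Differentiable ℝ (deriv u) := hd1.differentiable one_ne_zero
  have hcu : Continuous u := hu.continuous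
  have hcu' : Continuous (deriv u) := hd1.continuous
  have hcu'' : Continuous (deriv (deriv u)) := hd1.continuous_deriv le_rfl
  have hit2u : iteratedDeriv 2 u = deriv (deriv u) := by
    rw [show (2:ℕ) = 1+1 from rfl, iteratedDeriv_succ, iteratedDeriv_one]
  have hD1 : deriv (fun x => u x ^ 3) = fun x => 3 * u x ^ 2 * deriv u x := by
    funext x
    have := HasDerivAt.deriv (f := fun x => u x ^ 3) ((hud x).hasDerivAt.pow 3)
    simpa using this
  have hD2 : iteratedDeriv 2 (fun x => u x ^ 3)
      = fun x => 6 * u x * (deriv u x)^2 + 3 * u x ^ 2 * deriv (deriv u) x := by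
    rw [show iteratedDeriv 2 (fun x => u x ^ 3) = iteratedDeriv (1+1) (fun x => u x ^ 3) from rfl, iteratedDeriv_succ, iteratedDeriv_one, hD1]
    funext x
    have h1 : HasDerivAt u (deriv u x) x := (hud x).hasDerivAt
    have hb : HasDerivAt (deriv u) (deriv (deriv u) x) x := (hud2 x).hasDerivAt
    have ha : HasDerivAt (fun x => 3 * u x ^ 2) (3 * (2 * u x * deriv u x)) x := by
      simpa [mul_assoc] using (h1.pow 2).const_mul (3:ℝ)
    have hm : HasDerivAt (fun x => 3 * u x ^ 2 * deriv u x) _ x := ha.mul hb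
    rw [hm.deriv]; ring
  set g : ℝ → ℝ := fun x => u x ^ 3 * (deriv u x) ^ 3 with hg
  set G : ℝ → ℝ := fun x => 3 * u x ^ 2 * (deriv u x)^4 + 3 * u x ^ 3 * (deriv u x)^2 * deriv (deriv u) x with hG
  have hgderiv : ∀ x, HasDerivAt g (G x) x := by
    intro x
    have h1 : HasDerivAt u (deriv u x) x := (hud x).hasDerivAt
    have hb : HasDerivAt (deriv u) (deriv (deriv u) x) x := (hud2 x).hasDerivAt
    have this : HasDerivAt (fun y => u y ^ 3 * deriv u y ^ 3) _ x := (h1.pow 3).mul (hb.pow 3)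
    convert this using 1
    push_cast [Pi.pow_apply]; ring
  have hGcont : Continuous G := by
    apply Continuous.add
    · exact ((continuous_const.mul (hcu.pow 2)).mul (hcu'.pow 4))
    · exact ((continuous_const.mul (hcu.pow 3)).mul (hcu'.pow 2)).mul hcu''
  have hper' : ∀ h : ℝ, deriv u (h+1) = deriv u h := by
    intro h
    have he : (fun x => u (x + 1)) = u := funext hper
    calc deriv u (h+1) = deriv (fun x => u (x+1)) h := (deriv_comp_add_const u 1 h).symm
      _ = deriv u h := by rw [he]
  have hint : ∫ x in (0:ℝ)..1, G x = g 1 - g 0 :=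
    intervalIntegral.integral_eq_sub_of_hasDerivAt (fun x _ => hgderiv x)
      (hGcont.intervalIntegrable 0 1)
  have hu10 : u 1 = u 0 := by simpa using hper 0
  have hu10' : deriv u 1 = deriv u 0 := by simpa using hper' 0
  have hg10 : g 1 - g 0 = 0 := by simp [hg, hu10, hu10']
  have hGzero : ∫ x in (0:ℝ)..1, G x = 0 := by rw [hint, hg10]
  -- pointwise identity
  have hpt : ∀ h : ℝ, (iteratedDeriv 2 (fun x => (u x) ^ 3) h) ^ 2
      = 9 * ((u h) ^ 4 * (iteratedDeriv 2 u h) ^ 2) + 12 * G h := by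
    intro h
    rw [hD2, hit2u, hG]
    ring
  have hI1 : IntervalIntegrable (fun h => 9 * ((u h) ^ 4 * (deriv (deriv u) h) ^ 2)) MeasureTheory.volume 0 1 := by
    exact (continuous_const.mul ((hcu.pow 4).mul (hcu''.pow 2))).intervalIntegrable 0 1
  have hI2 : IntervalIntegrable (fun h => 12 * G h) MeasureTheory.volume 0 1 :=
    (continuous_const.mul hGcont).intervalIntegrable 0 1
  calc ∫ h in (0:ℝ)..1, (iteratedDeriv 2 (fun x => (u x) ^ 3) h) ^ 2
      = ∫ h in (0:ℝ)..1, (9 * ((u h) ^ 4 * (deriv (deriv u) h) ^ 2) + 12 * G h) := by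
        apply intervalIntegral.integral_congr
        intro h _
        simpa [hit2u] using hpt h
    _ = (∫ h in (0:ℝ)..1, 9 * ((u h) ^ 4 * (deriv (deriv u) h) ^ 2)) + ∫ h in (0:ℝ)..1, 12 * G h :=
        intervalIntegral.integral_add hI1 hI2
    _ = 9 * ∫ h in (0:ℝ)..1, (u h) ^ 4 * (iteratedDeriv 2 u h) ^ 2 := by
        rw [intervalIntegral.integral_const_mul, intervalIntegral.integral_const_mul, hGzero, hit2u]
        ring
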